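/- Let q be a prime power with q ≥ 4. If there exists a linear code over F_q with parameters [n, k, d]_q (length n, dimension k, minimum distance d), then there exists an LCD code over F_q with the same parameters [n, k, d]_q. -/

import Mathlib

/-- The Euclidean dual of a linear code `C ⊆ F^n`. -/
def dualCode {F : Type*} [Field F] {n : ℕ} (C : Submodule F (Fin n → F)) :
    Submodule F (Fin n → F) where
  carrier := {x | ∀ c ∈ C, ∑ i, x i * c i = 0}
  add_mem' := by
    intro x y hx hy c hc
    simp [add_mul, Finset.sum_add_distrib, hx c hc, hy c hc]
  zero_mem' := by
    intro c hc
    simp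
  smul_mem' := by
    intro a x hx c hc
    simp [smul_eq_mul, mul_assoc, ← Finset.mul_sum, hx c hc]

/-- `C` is an `[n, k, d]` code: it has dimension `k` and minimum Hamming
weight of a nonzero codeword equal to `d`. -/
def HasParams {F : Type*} [Field F] [DecidableEq F] {n : ℕ}
    (C : Submodule F (Fin n → F)) (k d : ℕ) : Prop :=
  Module.finrank F C = k ∧
    (∀ c ∈ C, c ≠ 0 → d ≤ hammingNorm c) ∧
    ∃ c ∈ C, c ≠ 0 ∧ hammingNorm c = d

section LCDAux
open Matrix Finset

variable {F : Type*} [Field F]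

lemma det_piecewise_add_smul {k : ℕ} (c : Fin k → F) (w : Fin k → F) (s : Finset (Fin k)) :
    ∀ A : Matrix (Fin k) (Fin k) F,
      (Matrix.of fun i j => if i ∈ s then A i j + c i * w j else A i j).det
        = A.det + ∑ i ∈ s, c i * (A.updateRow i w).det := by
  classical
  induction s using Finset.induction_on with
  | empty =>
    intro A
    simp only [Finset.notMem_empty, if_false, Finset.sum_empty, add_zero]
    rfl
  | @insert a s ha ih =>
    intro A
    have key : (Matrix.of fun i j => if i ∈ insert a s then A i j + c i * w j else A i j)
        = ((Matrix.of fun i j => if i ∈ s then A i j + c i * w j else A i j).updateRow a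
            (A a + c a • w)) := by
      ext i j
      by_cases hia : i = a
      · subst hia
        simp [Matrix.updateRow_self, ha]
      · simp [Matrix.updateRow_ne hia, hia]
    rw [key, Matrix.det_updateRow_add, Matrix.det_updateRow_smul]
    have e1 : (Matrix.of fun i j => if i ∈ s then A i j + c i * w j else A i j).updateRow a (A a)
        = (Matrix.of fun i j => if i ∈ s then A i j + c i * w j else A i j) := by
      ext i j
      by_cases hia : i = a
      · subst hia
        simp [Matrix.updateRow_self, ha]
      · simp [Matrix.updateRow_ne hia]
    have e2 : (Matrix.of fun i j => if i ∈ s then A i j + c i * w j else A i j).updateRow a w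
        = (Matrix.of fun i j => if i ∈ s then (A.updateRow a w) i j + c i * w j
            else (A.updateRow a w) i j) := by
      ext i j
      by_cases hia : i = a
      · subst hia
        simp [Matrix.updateRow_self, ha]
      · simp [Matrix.updateRow_ne hia, hia]
    rw [e1, e2, ih, ih]
    have hz : ∑ i ∈ s, c i * ((A.updateRow a w).updateRow i w).det = 0 := by
      refine Finset.sum_eq_zero fun i hi => ?_
      have hia : i ≠ a := fun h => ha (h ▸ hi)
      have : ((A.updateRow a w).updateRow i w).det = 0 := by
        refine Matrix.det_zero_of_row_eq hia ?_
        rw [Matrix.updateRow_self, Matrix.updateRow_ne (Ne.symm hia), Matrix.updateRow_self]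
      rw [this, mul_zero]
    rw [hz, add_zero, Finset.sum_insert ha]
    ring

/-- The Gram matrix of the rows `B` with coordinate weights `dd`. -/
noncomputable def gramB {n k : ℕ} (B : Fin k → Fin n → F) (dd : Fin n → F) :
    Matrix (Fin k) (Fin k) F :=
  Matrix.of fun i j => ∑ l, dd l * B i l * B j l

lemma gram_affine {n k : ℕ} (B : Fin k → Fin n → F) (dd : Fin n → F) (l : Fin n) :
    ∃ α β : F, ∀ t : F, (gramB B (Function.update dd l t)).det = α + t * β := by
  classical
  set M₀ : Matrix (Fin k) (Fin k) F := gramB B (Function.update dd l 0) with hM₀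
  refine ⟨M₀.det, ∑ i, B i l * (M₀.updateRow i fun j => B j l).det, fun t => ?_⟩
  have key : gramB B (Function.update dd l t)
      = Matrix.of fun i j => M₀ i j + (t * B i l) * B j l := by
    ext i j
    simp only [gramB, Matrix.of_apply, hM₀]
    have h1 : ∀ u : F, (fun l' => Function.update dd l u l' * B i l' * B j l')
        = Function.update (fun l' => dd l' * B i l' * B j l') l (u * B i l * B j l) := by
      intro u
      funext l'
      by_cases hl : l' = l
      · subst hl; simp
      · simp [Function.update_of_ne hl]
    rw [show (∑ l', Function.update dd l t l' * B i l' * B j l')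
        = ∑ l', Function.update (fun l' => dd l' * B i l' * B j l') l (t * B i l * B j l) l'
        from by rw [← h1]]
    rw [show (∑ l', Function.update dd l 0 l' * B i l' * B j l')
        = ∑ l', Function.update (fun l' => dd l' * B i l' * B j l') l (0 * B i l * B j l) l'
        from by rw [← h1]]
    rw [Finset.sum_update_of_mem (Finset.mem_univ l), Finset.sum_update_of_mem (Finset.mem_univ l)]
    ring
  have main := det_piecewise_add_smul (fun i => t * B i l) (fun j => B j l) Finset.univ M₀
  simp only [Finset.mem_univ, if_true] at main
  rw [key, main, Finset.mul_sum]
  congr 1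
  refine Finset.sum_congr rfl fun i _ => ?_
  ring

lemma exists_on_grid {n : ℕ} (f : (Fin n → F) → F)
    (hf : ∀ (dd : Fin n → F) (l : Fin n), ∃ α β : F, ∀ t : F,
      f (Function.update dd l t) = α + t * β)
    {s t : F} (hst : s ≠ t) {x : Fin n → F} (hx : f x ≠ 0) :
    ∃ y : Fin n → F, (∀ l, y l = s ∨ y l = t) ∧ f y ≠ 0 := by
  classical
  suffices H : ∀ T : Finset (Fin n), ∃ y : Fin n → F,
      (∀ l ∈ T, y l = s ∨ y l = t) ∧ f y ≠ 0 by
    obtain ⟨y, hy1, hy2⟩ := H Finset.univ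
    exact ⟨y, fun l => hy1 l (Finset.mem_univ l), hy2⟩
  intro T
  induction T using Finset.induction_on with
  | empty => exact ⟨x, by simp, hx⟩
  | @insert j T hj ih =>
    obtain ⟨y, hy1, hy2⟩ := ih
    obtain ⟨α, β, hab⟩ := hf y j
    have hyy : α + y j * β ≠ 0 := by
      rw [← hab (y j), Function.update_eq_self]; exact hy2
    have step : ∃ u : F, (u = s ∨ u = t) ∧ f (Function.update y j u) ≠ 0 := by
      by_cases hs : α + s * β ≠ 0
      · exact ⟨s, Or.inl rfl, by rw [hab]; exact hs⟩
      by_cases ht : α + t * β ≠ 0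
      · exact ⟨t, Or.inr rfl, by rw [hab]; exact ht⟩
      push_neg at hs ht
      exfalso
      have hβ : β = 0 := by
        have : (s - t) * β = 0 := by
          have := sub_eq_zero.mpr (hs.trans ht.symm)
          ring_nf at this ⊢
          linear_combination this
        rcases mul_eq_zero.mp this with h | h
        · exact absurd (sub_eq_zero.mp h) hst
        · exact h
      apply hyy
      rw [hβ, mul_zero, add_zero]
      have := hs
      rw [hβ, mul_zero, add_zero] at this
      exact this
    obtain ⟨u, hu1, hu2⟩ := step
    refine ⟨Function.update y j u, fun l hl => ?_, hu2⟩
    rcases Finset.mem_insert.mp hl with rfl | hlT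
    · rw [Function.update_self]; exact hu1
    · have hlj : l ≠ j := fun h => hj (h ▸ hlT)
      rw [Function.update_of_ne hlj]; exact hy1 l hlT

lemma two_squares [Fintype F] [DecidableEq F] (hq : 4 ≤ Fintype.card F) :
    ∃ s t : F, s ≠ t ∧ (∃ u : F, u ≠ 0 ∧ u * u = s) ∧ ∃ v : F, v ≠ 0 ∧ v * v = t := by
  classical
  have hx : ∃ x : F, x ≠ 0 ∧ x * x ≠ 1 := by
    by_contra hcon
    push_neg at hcon
    set p : Polynomial F := Polynomial.X ^ 3 - Polynomial.X with hp
    have hdeg : p.natDegree = 3 := by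
      rw [hp]; compute_degree!
    have hpne : p ≠ 0 := fun h => by simp [h] at hdeg
    have hroot : ∀ y : F, y ∈ p.roots.toFinset := by
      intro y
      rw [Multiset.mem_toFinset, Polynomial.mem_roots hpne]
      simp only [Polynomial.IsRoot, hp, Polynomial.eval_sub, Polynomial.eval_pow,
        Polynomial.eval_X]
      by_cases hy : y = 0
      · simp [hy]
      · have := hcon y hy
        have : y ^ 3 = y := by
          calc y ^ 3 = y * y * y := by ring
          _ = 1 * y := by rw [hcon y hy]
          _ = y := one_mul y
        rw [this, sub_self]
    have hcard : Fintype.card F ≤ 3 := by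
      calc Fintype.card F = Finset.univ.card := rfl
        _ ≤ p.roots.toFinset.card := Finset.card_le_card fun y _ => hroot y
        _ ≤ Multiset.card p.roots := Multiset.toFinset_card_le _
        _ ≤ p.natDegree := Polynomial.card_roots' p
        _ = 3 := hdeg
    omega
  obtain ⟨x, hx0, hx1⟩ := hx
  exact ⟨1, x * x, fun h => hx1 h.symm, ⟨1, one_ne_zero, one_mul 1⟩, ⟨x, hx0, rfl⟩⟩

lemma exists_base_point {n k : ℕ} (B : Fin k → Fin n → F) (hB : LinearIndependent F B) :
    ∃ dd : Fin n → F, (gramB B dd).det ≠ 0 := by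
  classical
  set M : Matrix (Fin k) (Fin n) F := Matrix.of fun i l => B i l with hM
  -- rows of M are linearly independent, hence `Mᵀ.mulVec` is injective
  have hinj : Function.Injective M.vecMul := Matrix.vecMul_injective_iff.mpr hB
  have hinj' : Function.Injective Mᵀ.mulVecLin := by
    intro u v huv
    apply hinj
    have : ∀ w, Mᵀ.mulVecLin w = M.vecMul w := by
      intro w
      rw [Matrix.mulVecLin_apply, ← Matrix.vecMul_transpose, Matrix.transpose_transpose]
    show u ᵥ* M = v ᵥ* M
    rw [← this, ← this, huv]
  have hrankT : Mᵀ.rank = k := by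
    rw [Matrix.rank, LinearMap.finrank_range_of_inj hinj']
    simp [Module.finrank_pi]
  have hrank : M.rank = k := by rw [← Matrix.rank_transpose, hrankT]
  have hspan : Submodule.span F (Set.range Mᵀ) = ⊤ := by
    apply Submodule.eq_top_of_finrank_eq
    rw [show Set.range Mᵀ = Set.range M.col from rfl, ← Matrix.rank_eq_finrank_span_cols, hrank]
    simp [Module.finrank_pi]
  obtain ⟨b, hbsub, hbspan, hbli⟩ := exists_linearIndependent F (Set.range Mᵀ)
  rw [hspan] at hbspan
  have hbasis : Module.Basis b F (Fin k → F) :=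
    Module.Basis.mk hbli (by rw [Subtype.range_coe, hbspan])
  have : Fintype b := FiniteDimensional.fintypeBasisIndex hbasis
  have hcardb : Fintype.card b = k := by
    have := Module.finrank_eq_card_basis hbasis
    simp only [Module.finrank_pi, Fintype.card_fin] at this
    omega
  let e : Fin k ≃ b := (Fintype.equivFinOfCardEq hcardb).symm
  have hchoice : ∀ j : Fin k, ∃ l : Fin n, Mᵀ l = (e j : Fin k → F) := by
    intro j
    have : (e j : Fin k → F) ∈ Set.range Mᵀ := hbsub (e j).2
    obtain ⟨l, hl⟩ := this
    exact ⟨l, hl⟩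
  choose g hg using hchoice
  have hginj : Function.Injective g := by
    intro j j' hjj
    have : (e j : Fin k → F) = (e j' : Fin k → F) := by rw [← hg, ← hg, hjj]
    exact e.injective (Subtype.ext this)
  set N : Matrix (Fin k) (Fin k) F := Matrix.of fun i j => B i (g j) with hN
  have hNcols : LinearIndependent F (fun j => Nᵀ j) := by
    have : (fun j : Fin k => Nᵀ j) = fun j => (e j : Fin k → F) := by
      funext j
      rw [← hg j]
      rfl
    rw [this]
    exact hbli.comp (fun j => e j) (fun a a' h => e.injective (Subtype.ext (congrArg _ h)))
  have hNunit : IsUnit N := Matrix.linearIndependent_cols_iff_isUnit.mp hNcols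
  have hNdet : N.det ≠ 0 := by
    have := (Matrix.isUnit_iff_isUnit_det N).mp hNunit
    exact this.ne_zero
  refine ⟨fun l => if l ∈ Finset.image g Finset.univ then (1 : F) else 0, ?_⟩
  have hgram : gramB B (fun l => if l ∈ Finset.image g Finset.univ then (1 : F) else 0)
      = N * Nᵀ := by
    ext i j
    simp only [gramB, Matrix.of_apply, Matrix.mul_apply, Matrix.transpose_apply, hN]
    rw [show (∑ l, (if l ∈ Finset.image g Finset.univ then (1 : F) else 0) * B i l * B j l)
        = ∑ l, (if l ∈ Finset.image g Finset.univ then B i l * B j l else 0) from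
      Finset.sum_congr rfl fun l _ => by split <;> ring]
    rw [Finset.sum_ite_mem, Finset.univ_inter, Finset.sum_image fun a _ b _ h => hginj h]
  rw [hgram, Matrix.det_mul, Matrix.det_transpose]
  exact mul_ne_zero hNdet hNdet

/-- Coordinatewise scaling as a linear map. -/
def scaleLinear {n : ℕ} (a : Fin n → F) : (Fin n → F) →ₗ[F] (Fin n → F) where
  toFun x := fun i => a i * x i
  map_add' x y := by funext i; simp [mul_add]
  map_smul' c x := by funext i; simp [smul_eq_mul]; ring

/-- Coordinatewise scaling by nonzero scalars as a linear equivalence. -/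
noncomputable def scaleEquiv {n : ℕ} (a : Fin n → F) (ha : ∀ i, a i ≠ 0) :
    (Fin n → F) ≃ₗ[F] (Fin n → F) :=
  LinearEquiv.ofLinear (scaleLinear a) (scaleLinear fun i => (a i)⁻¹)
    (by
      apply LinearMap.ext; intro x; funext i
      simp only [LinearMap.comp_apply, scaleLinear, LinearMap.coe_mk, AddHom.coe_mk,
        LinearMap.id_apply]
      field_simp
      rw [mul_comm, mul_div_assoc, div_self (ha i), mul_one])
    (by
      apply LinearMap.ext; intro x; funext i
      simp only [LinearMap.comp_apply, scaleLinear, LinearMap.coe_mk, AddHom.coe_mk,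
        LinearMap.id_apply]
      field_simp
      rw [mul_comm, mul_div_assoc, div_self (ha i), mul_one])

lemma hammingNorm_scale [DecidableEq F] {n : ℕ} (a : Fin n → F) (ha : ∀ i, a i ≠ 0)
    (x : Fin n → F) : hammingNorm (fun i => a i * x i) = hammingNorm x := by
  unfold hammingNorm
  congr 1
  ext i
  simp [mul_ne_zero_iff, ha i]

@[simp] lemma scaleEquiv_apply {n : ℕ} (a : Fin n → F) (ha : ∀ i, a i ≠ 0) (x : Fin n → F) :
    scaleEquiv a ha x = fun i => a i * x i := rfl

end LCDAux

/-- If there is an `[n, k, d]_q` linear code with `q ≥ 4`, then there is an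
LCD code with the same parameters `[n, k, d]_q`. -/
theorem exists_LCD_code_of_exists_code {F : Type*} [Field F] [DecidableEq F]
    [Fintype F] (hq : 4 ≤ Fintype.card F) {n k d : ℕ}
    (h : ∃ C : Submodule F (Fin n → F), HasParams C k d) :
    ∃ C : Submodule F (Fin n → F), HasParams C k d ∧ C ⊓ dualCode C = ⊥ := by
  classical
  obtain ⟨C, hk, hmin, hex⟩ := h
  let b : Module.Basis (Fin k) F C := Module.finBasisOfFinrankEq F C hk
  set B : Fin k → Fin n → F := fun i => (b i : Fin n → F) with hB
  have hBli : LinearIndependent F B := b.linearIndependent.map' C.subtype C.ker_subtype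
  obtain ⟨d₀, hd₀⟩ := exists_base_point B hBli
  obtain ⟨s, t, hst, hs, ht⟩ := two_squares (F := F) hq
  obtain ⟨y, hy, hfy⟩ := exists_on_grid (fun dd => (gramB B dd).det)
      (fun dd l => gram_affine B dd l) hst hd₀
  have hsq : ∀ l, ∃ u : F, u ≠ 0 ∧ u * u = y l := by
    intro l
    rcases hy l with h | h
    · rw [h]; exact hs
    · rw [h]; exact ht
  choose a ha0 ha2 using hsq
  let e := scaleEquiv a ha0
  refine ⟨C.map (e : (Fin n → F) →ₗ[F] (Fin n → F)), ⟨?_, ?_, ?_⟩, ?_⟩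
  · exact (LinearEquiv.finrank_map_eq e C).trans hk
  · rintro c' hc' hne
    obtain ⟨c, hc, rfl⟩ := Submodule.mem_map.mp hc'
    have hc0 : c ≠ 0 := by
      rintro rfl
      apply hne
      simp
    have : hammingNorm ((e : (Fin n → F) →ₗ[F] (Fin n → F)) c) = hammingNorm c := by
      simpa [e] using hammingNorm_scale a ha0 c
    rw [this]
    exact hmin c hc hc0
  · obtain ⟨c, hc, hc0, hcd⟩ := hex
    refine ⟨(e : (Fin n → F) →ₗ[F] (Fin n → F)) c, Submodule.mem_map.mpr ⟨c, hc, rfl⟩, ?_, ?_⟩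
    · simpa using fun h => hc0 (e.map_eq_zero_iff.mp (by simpa using h))
    · rw [← hcd]
      simpa [e] using hammingNorm_scale a ha0 c
  · rw [eq_bot_iff]
    rintro x hx
    rw [Submodule.mem_inf] at hx
    obtain ⟨hx1, hx2⟩ := hx
    obtain ⟨c, hc, rfl⟩ := Submodule.mem_map.mp hx1
    rw [Submodule.mem_bot]
    suffices hc0 : c = 0 by rw [hc0]; simp
    set cc : C := ⟨c, hc⟩ with hcc
    set tv : Fin k → F := fun j => b.repr cc j with htv
    have hcsum : ∀ i, c i = ∑ j, tv j * B j i := by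
      intro i
      have h1 : (∑ j, b.repr cc j • b j) = cc := b.sum_repr cc
      calc c i = ((∑ j, b.repr cc j • b j : C) : Fin n → F) i := by rw [h1]
        _ = ∑ j, tv j * B j i := by
            rw [Submodule.coe_sum]
            simp [B, htv]
    have hE : ∀ j' : Fin k, ∑ i, (a i * c i) * (a i * B j' i) = 0 := by
      intro j'
      have hmem : (e : (Fin n → F) →ₗ[F] (Fin n → F)) (B j')
          ∈ C.map (e : (Fin n → F) →ₗ[F] (Fin n → F)) :=
        Submodule.mem_map.mpr ⟨B j', (b j').2, rfl⟩
      have := hx2 _ hmem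
      simpa [e] using this
    have hmv : (gramB B y).mulVec tv = 0 := by
      funext j'
      simp only [Matrix.mulVec, dotProduct, gramB, Matrix.of_apply, Pi.zero_apply]
      calc ∑ j, (∑ i, y i * B j' i * B j i) * tv j
          = ∑ j, ∑ i, y i * B j' i * B j i * tv j :=
            Finset.sum_congr rfl fun j _ => Finset.sum_mul _ _ _
        _ = ∑ i, ∑ j, y i * B j' i * B j i * tv j := Finset.sum_comm
        _ = ∑ i, (a i * c i) * (a i * B j' i) := by
            refine Finset.sum_congr rfl fun i _ => ?_
            have expand : (a i * (∑ j, tv j * B j i)) * (a i * B j' i)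
                = ∑ j, (a i * a i) * B j' i * B j i * tv j := by
              rw [Finset.mul_sum, Finset.sum_mul]
              exact Finset.sum_congr rfl fun j _ => by ring
            rw [hcsum i, expand]
            refine Finset.sum_congr rfl fun j _ => ?_
            rw [ha2 i]
        _ = 0 := hE j'
    have hunit : IsUnit (gramB B y) :=
      (Matrix.isUnit_iff_isUnit_det _).mpr (isUnit_iff_ne_zero.mpr hfy)
    have htv0 : tv = 0 := by
      have hinj := Matrix.mulVec_injective_iff_isUnit.mpr hunit
      apply hinj
      rw [hmv, Matrix.mulVec_zero]
    funext i
    rw [hcsum i]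
    simp [htv0]
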